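/- For any two density operators ρ and σ on a finite-dimensional Hilbert space, 1 − F(ρ, σ) ≤ (1/2)‖ρ − σ‖₁, where F is the fidelity. -/

import Mathlib

open Matrix BigOperators Kronecker ComplexOrder

noncomputable def negMulLogb (x : ℝ) : ℝ := -(x * Real.logb 2 x)

/-- von Neumann entropy (base 2) of a matrix, via its eigenvalues. -/
noncomputable def vN {n : Type*} [Fintype n] [DecidableEq n] (ρ : Matrix n n ℂ) : ℝ :=
  if h : ρ.IsHermitian then ∑ i, negMulLogb (h.eigenvalues i) else 0

/-- A density operator: positive semidefinite with unit trace. -/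
def IsDensity {n : Type*} [Fintype n] [DecidableEq n] (ρ : Matrix n n ℂ) : Prop :=
  ρ.PosSemidef ∧ ρ.trace = 1

/-- Partial trace over the second tensor factor. -/
noncomputable def ptraceB {A B : Type*} [Fintype B] (ρ : Matrix (A × B) (A × B) ℂ) :
    Matrix A A ℂ :=
  Matrix.of fun a a' => ∑ b, ρ (a, b) (a', b)

/-- Partial trace over the first tensor factor. -/
noncomputable def ptraceA {A B : Type*} [Fintype A] (ρ : Matrix (A × B) (A × B) ℂ) :
    Matrix B B ℂ :=
  Matrix.of fun b b' => ∑ a, ρ (a, b) (a, b')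

/-- Positive square root of a positive semidefinite matrix (junk value 0 otherwise). -/
noncomputable def msqrt {n : Type*} [Fintype n] [DecidableEq n] (M : Matrix n n ℂ) :
    Matrix n n ℂ :=
  by classical exact if h : M.PosSemidef then
    h.1.eigenvectorUnitary.1 * diagonal ((↑) ∘ Real.sqrt ∘ h.1.eigenvalues) *
      (star h.1.eigenvectorUnitary : Matrix n n ℂ) else 0

/-- Trace norm of a matrix. -/
noncomputable def traceNorm {n : Type*} [Fintype n] [DecidableEq n] (X : Matrix n n ℂ) : ℝ :=
  ((msqrt (Xᴴ * X)).trace).re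

/-- Outer product |ξ⟩⟨ξ|. -/
noncomputable def outer {n : Type*} (ξ : n → ℂ) : Matrix n n ℂ :=
  Matrix.of fun i j => ξ i * (starRingEnd ℂ) (ξ j)

/-- Fidelity `F(ρ,σ) = Tr √(√ρ σ √ρ)` (square-root convention). -/
noncomputable def fidelity {n : Type*} [Fintype n] [DecidableEq n] (ρ σ : Matrix n n ℂ) : ℝ :=
  ((msqrt (msqrt ρ * σ * msqrt ρ)).trace).re

section Helpers
variable {n : Type*} [Fintype n] [DecidableEq n]
set_option linter.unusedSectionVars false


-- H2: trace invariance under unitary conjugation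
lemma trace_conj_unitary (U : Matrix.unitaryGroup n ℂ) (B : Matrix n n ℂ) :
    (star (U : Matrix n n ℂ) * B * (U : Matrix n n ℂ)).trace = B.trace := by
  rw [Matrix.trace_mul_cycle, Matrix.mem_unitaryGroup_iff.mp U.2, one_mul]

-- H1: diagonal entry of conjugated matrix as quadratic form
lemma conj_entry (U B : Matrix n n ℂ) (i : n) :
    (star U * B * U) i i = star (fun j => U j i) ⬝ᵥ B *ᵥ (fun j => U j i) := by
  simp only [Matrix.mul_apply, dotProduct, Matrix.mulVec, Matrix.star_apply,
    Pi.star_apply, dotProduct, Finset.sum_mul, Finset.mul_sum]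
  rw [Finset.sum_comm]
  exact Finset.sum_congr rfl fun k _ => Finset.sum_congr rfl fun j _ => by ring

-- column norm of unitary
lemma unitary_col_norm (U : Matrix.unitaryGroup n ℂ) (i : n) :
    ∑ j, Complex.normSq ((U : Matrix n n ℂ) j i) = 1 := by
  have h := Matrix.mem_unitaryGroup_iff'.mp U.2
  have h1 : (star (U : Matrix n n ℂ) * (U : Matrix n n ℂ)) i i = 1 := by rw [h]; simp
  have : (∑ j, (Complex.normSq ((U : Matrix n n ℂ) j i) : ℂ)) = 1 := by
    rw [← h1]
    simp only [Matrix.mul_apply, Matrix.star_apply]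
    exact Finset.sum_congr rfl fun j _ => by
      rw [Complex.normSq_eq_conj_mul_self]; rfl
  exact_mod_cast this

open scoped MatrixOrder in
noncomputable def Matrix.PosSemidef.sqrt {M : Matrix n n ℂ} (hM : M.PosSemidef) :
    Matrix n n ℂ :=
  hM.1.eigenvectorUnitary.1 * diagonal ((↑) ∘ Real.sqrt ∘ hM.1.eigenvalues) *
    (star hM.1.eigenvectorUnitary : Matrix n n ℂ)

lemma Matrix.PosSemidef.posSemidef_sqrt {M : Matrix n n ℂ} (hM : M.PosSemidef) :
    hM.sqrt.PosSemidef := by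
  have hd : (diagonal ((↑) ∘ Real.sqrt ∘ hM.1.eigenvalues) : Matrix n n ℂ).PosSemidef :=
    Matrix.posSemidef_diagonal_iff.mpr fun j => Complex.zero_le_real.mpr (Real.sqrt_nonneg _)
  have := hd.mul_mul_conjTranspose_same (hM.1.eigenvectorUnitary : Matrix n n ℂ)
  rw [← star_eq_conjTranspose, ← Unitary.coe_star] at this
  exact this

lemma Matrix.PosSemidef.sqrt_mul_self {M : Matrix n n ℂ} (hM : M.PosSemidef) :
    hM.sqrt * hM.sqrt = M := by
  unfold Matrix.PosSemidef.sqrt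
  conv_rhs => rw [hM.1.spectral_theorem, Unitary.conjStarAlgAut_apply]
  have hU : (star hM.1.eigenvectorUnitary : Matrix n n ℂ) * hM.1.eigenvectorUnitary.1 = 1 :=
    Unitary.coe_star_mul_self _
  rw [show ∀ a b c d e : Matrix n n ℂ, a * b * c * (d * b * e) = a * (b * (c * d) * b) * e by
    intro a b c d e; simp only [mul_assoc], hU, mul_one, diagonal_mul_diagonal]
  congr 2
  refine congrArg diagonal (funext fun j => ?_)
  simp only [Function.comp_apply]
  rw [← Complex.ofReal_mul, Real.mul_self_sqrt (hM.eigenvalues_nonneg j)]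
  rfl

open scoped MatrixOrder in
lemma Matrix.PosSemidef.eq_sqrt_of_sq_eq {A B : Matrix n n ℂ} (hA : A.PosSemidef)
    (hB : B.PosSemidef) (hAB : A ^ 2 = B) : A = hB.sqrt := by
  have h1 : CFC.sqrt B = hB.sqrt :=
    CFC.sqrt_unique hB.sqrt_mul_self hB.posSemidef_sqrt.nonneg
  have h2 : CFC.sqrt B = A := CFC.sqrt_unique (by rw [← hAB, pow_two]) hA.nonneg
  rw [← h1, h2]

lemma Matrix.IsHermitian.star_mul_self_mul_eq_diagonal {A : Matrix n n ℂ} (hA : A.IsHermitian) :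
    star (hA.eigenvectorUnitary : Matrix n n ℂ) * A * (hA.eigenvectorUnitary : Matrix n n ℂ)
      = diagonal (RCLike.ofReal ∘ hA.eigenvalues) := by
  have := hA.conjStarAlgAut_star_eigenvectorUnitary
  rw [Unitary.conjStarAlgAut_apply, Unitary.coe_star, star_star] at this
  exact this

lemma msqrt_eq {M : Matrix n n ℂ} (hM : M.PosSemidef) : msqrt M = hM.sqrt := dif_pos hM

lemma msqrt_posSemidef {M : Matrix n n ℂ} (hM : M.PosSemidef) : (msqrt M).PosSemidef := by
  rw [msqrt_eq hM]; exact hM.posSemidef_sqrt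

lemma msqrt_mul_self {M : Matrix n n ℂ} (hM : M.PosSemidef) : msqrt M * msqrt M = M := by
  rw [msqrt_eq hM]; exact hM.sqrt_mul_self

-- conjugation helpers
lemma conj_mul_conj (U : Matrix.unitaryGroup n ℂ) (P Q : Matrix n n ℂ) :
    ((U : Matrix n n ℂ) * P * star (U : Matrix n n ℂ)) *
      ((U : Matrix n n ℂ) * Q * star (U : Matrix n n ℂ))
      = (U : Matrix n n ℂ) * (P * Q) * star (U : Matrix n n ℂ) := by
  have h : star (U : Matrix n n ℂ) * ((U : Matrix n n ℂ) * (Q * star (U : Matrix n n ℂ)))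
      = Q * star (U : Matrix n n ℂ) := by
    rw [← mul_assoc, Matrix.mem_unitaryGroup_iff'.mp U.2, one_mul]
  simp only [mul_assoc, h]

lemma star_conj_mul (U : Matrix.unitaryGroup n ℂ) (P Q : Matrix n n ℂ) :
    star (U : Matrix n n ℂ) * (P * Q) * (U : Matrix n n ℂ)
      = (star (U : Matrix n n ℂ) * P * (U : Matrix n n ℂ)) *
        (star (U : Matrix n n ℂ) * Q * (U : Matrix n n ℂ)) := by
  have h : (U : Matrix n n ℂ) * (star (U : Matrix n n ℂ) * (Q * (U : Matrix n n ℂ)))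
      = Q * (U : Matrix n n ℂ) := by
    rw [← mul_assoc, Matrix.mem_unitaryGroup_iff.mp U.2, one_mul]
  simp only [mul_assoc, h]

lemma utrace_conj (U : Matrix.unitaryGroup n ℂ) (D : Matrix n n ℂ) :
    ((U : Matrix n n ℂ) * D * star (U : Matrix n n ℂ)).trace = D.trace := by
  rw [Matrix.trace_mul_cycle, Matrix.mem_unitaryGroup_iff'.mp U.2, one_mul]

lemma utrace_conj' (U : Matrix.unitaryGroup n ℂ) (D : Matrix n n ℂ) :
    (star (U : Matrix n n ℂ) * D * (U : Matrix n n ℂ)).trace = D.trace := by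
  rw [Matrix.trace_mul_cycle, Matrix.mem_unitaryGroup_iff.mp U.2, one_mul]

-- trace of msqrt of a psd matrix
lemma trace_msqrt {M : Matrix n n ℂ} (hM : M.PosSemidef) :
    (msqrt M).trace = ∑ i, (Real.sqrt (hM.1.eigenvalues i) : ℂ) := by
  rw [msqrt_eq hM, Matrix.PosSemidef.sqrt, utrace_conj hM.1.eigenvectorUnitary,
    Matrix.trace_diagonal]
  rfl

lemma trace_msqrt_re {M : Matrix n n ℂ} (hM : M.PosSemidef) :
    ((msqrt M).trace).re = ∑ i, Real.sqrt (hM.1.eigenvalues i) := by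
  rw [trace_msqrt hM, Complex.re_sum]
  simp


lemma dot_norm_le (w z : n → ℂ) :
    ‖star w ⬝ᵥ z‖ ≤ Real.sqrt (∑ j, Complex.normSq (w j)) *
      Real.sqrt (∑ j, Complex.normSq (z j)) := by
  let x : EuclideanSpace ℂ n := (WithLp.equiv 2 (n → ℂ)).symm w
  let y : EuclideanSpace ℂ n := (WithLp.equiv 2 (n → ℂ)).symm z
  have h := norm_inner_le_norm (𝕜 := ℂ) x y
  rw [EuclideanSpace.inner_eq_star_dotProduct, dotProduct_comm] at h
  simp only [WithLp.equiv_symm_apply, WithLp.ofLp_toLp, x, y] at h ⊢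
  have hx : ‖x‖ = Real.sqrt (∑ j, Complex.normSq (w j)) := by
    rw [EuclideanSpace.norm_eq]
    congr 1
    refine Finset.sum_congr rfl fun j _ => ?_
    rw [← Complex.sq_norm]
    rfl
  have hy : ‖y‖ = Real.sqrt (∑ j, Complex.normSq (z j)) := by
    rw [EuclideanSpace.norm_eq]
    congr 1
    refine Finset.sum_congr rfl fun j _ => ?_
    rw [← Complex.sq_norm]
    rfl
  simp only [x, y, WithLp.equiv_symm_apply] at hx hy
  rw [hx, hy] at h
  convert h using 2

lemma dot_self_normSq (z : n → ℂ) :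
    star z ⬝ᵥ z = ((∑ j, Complex.normSq (z j) : ℝ) : ℂ) := by
  push_cast
  refine Finset.sum_congr rfl fun j _ => ?_
  rw [Complex.normSq_eq_conj_mul_self]
  rfl

theorem partB (ρ σ : Matrix n n ℂ) (hρ : ρ.PosSemidef) (hσ : σ.PosSemidef) :
    ((msqrt σ * msqrt ρ).trace).re ≤ ((msqrt (msqrt ρ * σ * msqrt ρ)).trace).re := by
  set R := msqrt ρ with hRdef
  set S := msqrt σ with hSdef
  have hR := msqrt_posSemidef hρ
  have hS := msqrt_posSemidef hσ
  set Y := S * R with hYdef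
  have hYH : Yᴴ = R * S := by rw [hYdef, Matrix.conjTranspose_mul, hR.1, hS.1]
  have hMeq : R * σ * R = Yᴴ * Y := by
    rw [hYH, hYdef, ← msqrt_mul_self hσ]
    simp only [mul_assoc, hSdef]
  have hM : (R * σ * R).PosSemidef := by
    rw [hMeq]; exact Matrix.posSemidef_conjTranspose_mul_self Y
  set W := hM.1.eigenvectorUnitary with hWdef
  set ν := hM.1.eigenvalues with hνdef
  rw [trace_msqrt_re hM]
  have htr : (Y.trace).re = ∑ i, ((star (W : Matrix n n ℂ) * Y * (W : Matrix n n ℂ)) i i).re := by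
    rw [← utrace_conj' W Y, Matrix.trace, Complex.re_sum]
    rfl
  rw [htr]
  refine Finset.sum_le_sum fun i _ => ?_
  set w : n → ℂ := fun j => (W : Matrix n n ℂ) j i with hwdef
  have he : (star (W : Matrix n n ℂ) * Y * (W : Matrix n n ℂ)) i i = star w ⬝ᵥ Y *ᵥ w :=
    conj_entry _ Y i
  have h5 : star w ⬝ᵥ (Yᴴ * Y) *ᵥ w = ((ν i : ℝ) : ℂ) := by
    rw [← hMeq, ← conj_entry, hM.1.star_mul_self_mul_eq_diagonal]
    simp [hνdef]
  have h4 : (∑ j, Complex.normSq ((Y *ᵥ w) j) : ℝ) = ν i := by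
    have : star (Y *ᵥ w) ⬝ᵥ (Y *ᵥ w) = star w ⬝ᵥ (Yᴴ * Y) *ᵥ w := by
      conv_rhs => rw [← Matrix.mulVec_mulVec, Matrix.dotProduct_mulVec, ← star_mulVec]
    rw [dot_self_normSq, h5] at this
    exact_mod_cast this
  have h3 : (∑ j, Complex.normSq (w j) : ℝ) = 1 := unitary_col_norm W i
  have h2 := dot_norm_le w (Y *ᵥ w)
  rw [h3, h4, Real.sqrt_one, one_mul] at h2
  rw [he]
  exact le_trans (Complex.re_le_norm _) h2

theorem partA (A B : Matrix n n ℂ) (hA : A.PosSemidef) (hB : B.PosSemidef) :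
    (((msqrt A - msqrt B) * (msqrt A - msqrt B)).trace).re
      ≤ ((msqrt ((A - B)ᴴ * (A - B))).trace).re := by
  have hR := msqrt_posSemidef hA
  have hS := msqrt_posSemidef hB
  set R := msqrt A with hRdef
  set S := msqrt B with hSdef
  set X := R - S with hXdef
  set Δ := A - B with hΔdef
  have hX : X.IsHermitian := hR.1.sub hS.1
  have hΔ : Δ.IsHermitian := hA.1.sub hB.1
  set V := hΔ.eigenvectorUnitary with hVdef
  set lam := hΔ.eigenvalues with hlamdef
  set absΔ : Matrix n n ℂ :=
    (V : Matrix n n ℂ) * Matrix.diagonal (Complex.ofReal ∘ fun j => |lam j|) *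
      star (V : Matrix n n ℂ) with habsdef
  -- absΔ is psd
  have hdiag_psd : (Matrix.diagonal (Complex.ofReal ∘ fun j => |lam j|)).PosSemidef :=
    Matrix.posSemidef_diagonal_iff.mpr fun j => Complex.zero_le_real.mpr (abs_nonneg _)
  have habs_psd : absΔ.PosSemidef := hdiag_psd.mul_mul_conjTranspose_same _
  -- absΔ squares to ΔᴴΔ
  have hdd : (Matrix.diagonal (Complex.ofReal ∘ fun j => |lam j|)) *
      (Matrix.diagonal (Complex.ofReal ∘ fun j => |lam j|)) =
      (Matrix.diagonal (RCLike.ofReal ∘ lam)) * (Matrix.diagonal (RCLike.ofReal ∘ lam)) := by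
    rw [Matrix.diagonal_mul_diagonal, Matrix.diagonal_mul_diagonal]
    refine congrArg Matrix.diagonal (funext fun j => ?_)
    show ((|lam j| : ℝ) : ℂ) * ((|lam j| : ℝ) : ℂ) = ((lam j : ℝ) : ℂ) * ((lam j : ℝ) : ℂ)
    rw [← Complex.ofReal_mul, ← Complex.ofReal_mul, abs_mul_abs_self]
  have hsq : absΔ ^ 2 = Δᴴ * Δ := by
    rw [hΔ.eq, pow_two, habsdef, conj_mul_conj]
    conv_rhs => rw [hΔ.spectral_theorem, Unitary.conjStarAlgAut_apply, conj_mul_conj]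
    rw [hdd]
  have hpsd2 : (Δᴴ * Δ).PosSemidef := Matrix.posSemidef_conjTranspose_mul_self Δ
  have habs_eq : msqrt (Δᴴ * Δ) = absΔ := by
    rw [msqrt_eq hpsd2]
    exact (habs_psd.eq_sqrt_of_sq_eq hpsd2 hsq).symm
  rw [habs_eq]
  -- eigen-decomposition of X
  set U := hX.eigenvectorUnitary with hUdef
  set μ := hX.eigenvalues with hμdef
  have hD : star (U : Matrix n n ℂ) * X * (U : Matrix n n ℂ)
      = Matrix.diagonal (Complex.ofReal ∘ μ) := hX.star_mul_self_mul_eq_diagonal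
  -- LHS as sum of squares of eigenvalues
  have hLHS : ((X * X).trace).re = ∑ i, (μ i) ^ 2 := by
    rw [← utrace_conj' U (X * X), star_conj_mul U X X, hD, Matrix.diagonal_mul_diagonal,
      Matrix.trace_diagonal, Complex.re_sum]
    refine Finset.sum_congr rfl fun i _ => ?_
    simp [pow_two]
  rw [hLHS]
  -- RHS as sum of diag entries
  have hRHS : (absΔ.trace).re
      = ∑ i, ((star (U : Matrix n n ℂ) * absΔ * (U : Matrix n n ℂ)) i i).re := by
    rw [← utrace_conj' U absΔ, Matrix.trace, Complex.re_sum]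
    rfl
  rw [hRHS]
  refine Finset.sum_le_sum fun i _ => ?_
  -- now the per-index inequality
  set c := star (U : Matrix n n ℂ) * (R + S) * (U : Matrix n n ℂ) with hcdef
  set rr := ((star (U : Matrix n n ℂ) * R * (U : Matrix n n ℂ)) i i).re with hrrdef
  set ss := ((star (U : Matrix n n ℂ) * S * (U : Matrix n n ℂ)) i i).re with hssdef
  have hrr : 0 ≤ rr := by
    have h0 := hR.dotProduct_mulVec_nonneg (fun j => (U : Matrix n n ℂ) j i)
    rw [Complex.le_def] at h0
    rw [hrrdef, conj_entry]
    exact h0.1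
  have hss : 0 ≤ ss := by
    have h0 := hS.dotProduct_mulVec_nonneg (fun j => (U : Matrix n n ℂ) j i)
    rw [Complex.le_def] at h0
    rw [hssdef, conj_entry]
    exact h0.1
  have hμi : μ i = rr - ss := by
    have h1 : ((star (U : Matrix n n ℂ) * X * (U : Matrix n n ℂ)) i i).re = μ i := by
      rw [hD]; simp
    have h2 : star (U : Matrix n n ℂ) * X * (U : Matrix n n ℂ)
        = star (U : Matrix n n ℂ) * R * (U : Matrix n n ℂ)
          - star (U : Matrix n n ℂ) * S * (U : Matrix n n ℂ) := by
      rw [hXdef, Matrix.mul_sub, Matrix.sub_mul]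
    rw [h2] at h1
    simp only [Matrix.sub_apply, Complex.sub_re] at h1
    rw [← h1]
  have hcre : (c i i).re = rr + ss := by
    have h2 : c = star (U : Matrix n n ℂ) * R * (U : Matrix n n ℂ)
        + star (U : Matrix n n ℂ) * S * (U : Matrix n n ℂ) := by
      rw [hcdef, Matrix.mul_add, Matrix.add_mul]
    rw [h2]
    simp [hrrdef, hssdef]
  -- key identity : (U* Δ U)_{ii} = μ i * c_{ii}
  have hkey : (star (U : Matrix n n ℂ) * Δ * (U : Matrix n n ℂ)) i i
      = (μ i : ℂ) * c i i := by
    have hXC : Δ + Δ = X * (R + S) + (R + S) * X := by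
      have hA' : R * R = A := msqrt_mul_self hA
      have hB' : S * S = B := msqrt_mul_self hB
      rw [hΔdef, ← hA', ← hB', hXdef]
      noncomm_ring
    have h3 : star (U : Matrix n n ℂ) * (Δ + Δ) * (U : Matrix n n ℂ)
        = Matrix.diagonal (Complex.ofReal ∘ μ) * c + c * Matrix.diagonal (Complex.ofReal ∘ μ) := by
      rw [hXC, Matrix.mul_add, Matrix.add_mul, star_conj_mul U X (R + S),
        star_conj_mul U (R + S) X, hD]
    have h4 := congrFun (congrFun h3 i) i
    simp only [Matrix.add_apply, Matrix.mul_add, Matrix.add_mul] at h4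
    rw [Matrix.diagonal_mul, Matrix.mul_diagonal] at h4
    simp only [Function.comp_apply] at h4
    have h5 : (star (U : Matrix n n ℂ) * Δ * (U : Matrix n n ℂ)) i i
          + (star (U : Matrix n n ℂ) * Δ * (U : Matrix n n ℂ)) i i
        = (μ i : ℂ) * c i i + (μ i : ℂ) * c i i := by
      rw [h4]; ring
    linear_combination h5 / 2
  have hΔre : ((star (U : Matrix n n ℂ) * Δ * (U : Matrix n n ℂ)) i i).re
      = μ i * (c i i).re := by
    rw [hkey]
    simp [Complex.mul_re]
  have hcnn : 0 ≤ (c i i).re := by rw [hcre]; linarith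
  have habs_mu : |μ i| ≤ (c i i).re := by
    rw [hμi, hcre]
    exact abs_le.mpr ⟨by linarith, by linarith⟩
  have h6 : μ i ^ 2 ≤ |((star (U : Matrix n n ℂ) * Δ * (U : Matrix n n ℂ)) i i).re| := by
    rw [hΔre, abs_mul, abs_of_nonneg hcnn]
    calc μ i ^ 2 = |μ i| * |μ i| := by rw [← sq_abs, pow_two]
      _ ≤ |μ i| * (c i i).re := mul_le_mul_of_nonneg_left habs_mu (abs_nonneg _)
  -- absΔ ± Δ are psd
  have hspect : Δ = (V : Matrix n n ℂ) * Matrix.diagonal (RCLike.ofReal ∘ lam) *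
      star (V : Matrix n n ℂ) := hΔ.spectral_theorem
  have hplus : (absΔ + Δ).PosSemidef := by
    have e : absΔ + Δ = (V : Matrix n n ℂ) *
        (Matrix.diagonal (Complex.ofReal ∘ fun j => |lam j|) +
          Matrix.diagonal (RCLike.ofReal ∘ lam)) * star (V : Matrix n n ℂ) := by
      rw [habsdef]
      conv_lhs => rw [hspect]
      rw [Matrix.mul_add, Matrix.add_mul]
    rw [e]
    refine Matrix.PosSemidef.mul_mul_conjTranspose_same ?_ _
    rw [Matrix.diagonal_add]
    refine Matrix.posSemidef_diagonal_iff.mpr fun j => ?_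
    show (0 : ℂ) ≤ ((|lam j| : ℝ) : ℂ) + ((lam j : ℝ) : ℂ)
    rw [← Complex.ofReal_add]
    exact Complex.zero_le_real.mpr (by linarith [neg_abs_le (lam j)])
  have hminus : (absΔ - Δ).PosSemidef := by
    have e : absΔ - Δ = (V : Matrix n n ℂ) *
        (Matrix.diagonal (Complex.ofReal ∘ fun j => |lam j|) -
          Matrix.diagonal (RCLike.ofReal ∘ lam)) * star (V : Matrix n n ℂ) := by
      rw [habsdef]
      conv_lhs => rw [hspect]
      rw [Matrix.mul_sub, Matrix.sub_mul]
    rw [e]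
    refine Matrix.PosSemidef.mul_mul_conjTranspose_same ?_ _
    rw [Matrix.diagonal_sub]
    refine Matrix.posSemidef_diagonal_iff.mpr fun j => ?_
    show (0 : ℂ) ≤ ((|lam j| : ℝ) : ℂ) - ((lam j : ℝ) : ℂ)
    rw [← Complex.ofReal_sub]
    exact Complex.zero_le_real.mpr (by linarith [le_abs_self (lam j)])
  have hqp : 0 ≤ ((star (U : Matrix n n ℂ) * (absΔ + Δ) * (U : Matrix n n ℂ)) i i).re := by
    have h0 := hplus.dotProduct_mulVec_nonneg (fun j => (U : Matrix n n ℂ) j i)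
    rw [Complex.le_def] at h0
    rw [conj_entry]
    exact h0.1
  have hqm : 0 ≤ ((star (U : Matrix n n ℂ) * (absΔ - Δ) * (U : Matrix n n ℂ)) i i).re := by
    have h0 := hminus.dotProduct_mulVec_nonneg (fun j => (U : Matrix n n ℂ) j i)
    rw [Complex.le_def] at h0
    rw [conj_entry]
    exact h0.1
  rw [Matrix.mul_add, Matrix.add_mul] at hqp
  rw [Matrix.mul_sub, Matrix.sub_mul] at hqm
  simp only [Matrix.add_apply, Matrix.sub_apply, Complex.add_re, Complex.sub_re] at hqp hqm
  calc μ i ^ 2 ≤ |((star (U : Matrix n n ℂ) * Δ * (U : Matrix n n ℂ)) i i).re| := h6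
    _ ≤ ((star (U : Matrix n n ℂ) * absΔ * (U : Matrix n n ℂ)) i i).re :=
      abs_le.mpr ⟨by linarith, by linarith⟩

theorem final {ρ σ : Matrix n n ℂ} (hρ : ρ.PosSemidef ∧ ρ.trace = 1)
    (hσ : σ.PosSemidef ∧ σ.trace = 1) :
    1 - ((msqrt (msqrt ρ * σ * msqrt ρ)).trace).re
      ≤ (1 / 2) * ((msqrt ((ρ - σ)ᴴ * (ρ - σ))).trace).re := by
  have hB := partB ρ σ hρ.1 hσ.1
  have hA := partA ρ σ hρ.1 hσ.1
  set R := msqrt ρ with hRdef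
  set S := msqrt σ with hSdef
  have hXX : (R - S) * (R - S) = ρ + σ - R * S - S * R := by
    rw [← msqrt_mul_self hρ.1, ← msqrt_mul_self hσ.1, ← hRdef, ← hSdef]
    noncomm_ring
  have htr : (((R - S) * (R - S)).trace).re = 2 - 2 * ((S * R).trace).re := by
    rw [hXX]
    simp only [Matrix.trace_sub, Matrix.trace_add, Matrix.trace_mul_comm R S, hρ.2, hσ.2,
      Complex.sub_re, Complex.add_re, Complex.one_re]
    ring
  rw [htr] at hA
  linarith

end Helpers

/-- `1 - F(ρ,σ) ≤ (1/2) ‖ρ - σ‖₁`. -/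
theorem one_sub_fidelity_le_half_traceNorm {n : Type*} [Fintype n] [DecidableEq n]
    (ρ σ : Matrix n n ℂ) (hρ : IsDensity ρ) (hσ : IsDensity σ) :
    1 - fidelity ρ σ ≤ (1 / 2) * traceNorm (ρ - σ) := by
  exact final hρ hσ
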